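/- For a > 0, b ∈ ℝ, c > 0, the Kummer density k_{a,b,c} satisfies, with s(x) = x(1+x) and τ(x) = (1−b)x − c x(1+x) + a, the differential equation (s·k_{a,b,c})′(x) = τ(x)·k_{a,b,c}(x) for all x > 0; moreover lim_{x→0⁺} x(1+x) k_{a,b,c}(x) = 0 and lim_{x→∞} x(1+x) k_{a,b,c}(x) = 0. -/

import Mathlib

open MeasureTheory Set Filter Real

/-- The Kummer density with parameters `a > 0`, `b ∈ ℝ`, `c > 0`
(normalized by its total mass). -/
noncomputable def kummerDensity (a b c : ℝ) (x : ℝ) : ℝ :=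
  (∫ t in Set.Ioi (0 : ℝ), t ^ (a - 1) * (1 + t) ^ (-a - b) * Real.exp (-(c * t)))⁻¹ *
    (x ^ (a - 1) * (1 + x) ^ (-a - b) * Real.exp (-(c * x)))

/-- the Kummer density satisfies, with `s(x) = x(1+x)` and
`τ(x) = (1−b)x − cx(1+x) + a`, the equation `(s·k_{a,b,c})' = τ·k_{a,b,c}` on `(0,∞)`;
moreover `x(1+x)k_{a,b,c}(x) → 0` as `x → 0⁺` and as `x → ∞`. -/
theorem kummer_ode_and_boundary_limits (a b c : ℝ) (ha : 0 < a) (hc : 0 < c) :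
    (∀ x ∈ Set.Ioi (0 : ℝ),
      HasDerivAt (fun y => y * (1 + y) * kummerDensity a b c y)
        (((1 - b) * x - c * x * (1 + x) + a) * kummerDensity a b c x) x) ∧
    Tendsto (fun x => x * (1 + x) * kummerDensity a b c x)
      (nhdsWithin 0 (Set.Ioi 0)) (nhds 0) ∧
    Tendsto (fun x => x * (1 + x) * kummerDensity a b c x) atTop (nhds 0) := by
  set K : ℝ :=
    (∫ t in Set.Ioi (0 : ℝ), t ^ (a - 1) * (1 + t) ^ (-a - b) * Real.exp (-(c * t)))⁻¹ with hK
  -- key pointwise identity on (0, ∞)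
  have key : ∀ y : ℝ, 0 < y →
      y * (1 + y) * kummerDensity a b c y
        = K * (y ^ a * ((1 + y) ^ (1 - a - b) * Real.exp (-(c * y)))) := by
    intro y hy
    have h1y : (0:ℝ) < 1 + y := by linarith
    have e1 : y ^ a = y ^ (a - 1) * y := by
      rw [← Real.rpow_add_one hy.ne']; ring_nf
    have e2 : (1 + y) ^ (1 - a - b) = (1 + y) ^ (-a - b) * (1 + y) := by
      rw [← Real.rpow_add_one h1y.ne']; ring_nf
    simp only [kummerDensity, ← hK, e1, e2]
    ring
  refine ⟨?_, ?_, ?_⟩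
  · -- the derivative
    intro x hx
    rw [Set.mem_Ioi] at hx
    have h1x : (0:ℝ) < 1 + x := by linarith
    have hpow : HasDerivAt (fun y : ℝ => y ^ a) (a * x ^ (a - 1)) x :=
      Real.hasDerivAt_rpow_const (Or.inl hx.ne')
    have hpow2 : HasDerivAt (fun y : ℝ => (1 + y) ^ (1 - a - b))
        ((1 - a - b) * (1 + x) ^ (1 - a - b - 1)) x := by
      simpa using ((hasDerivAt_id x).const_add 1).rpow_const (p := 1 - a - b) (Or.inl h1x.ne')
    have hexp : HasDerivAt (fun y : ℝ => Real.exp (-(c * y)))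
        (Real.exp (-(c * x)) * -c) x := by
      have h0 : HasDerivAt (fun y : ℝ => -(c * y)) (-c) x := by
        exact (((hasDerivAt_id x).const_mul c)).neg.congr_deriv (by ring)
      simpa using h0.exp
    have hG : HasDerivAt (fun y : ℝ => K * (y ^ a * ((1 + y) ^ (1 - a - b) * Real.exp (-(c * y)))))
        (K * ((a * x ^ (a - 1)) * ((1 + x) ^ (1 - a - b) * Real.exp (-(c * x)))
          + x ^ a * (((1 - a - b) * (1 + x) ^ (1 - a - b - 1)) * Real.exp (-(c * x))
            + (1 + x) ^ (1 - a - b) * (Real.exp (-(c * x)) * -c)))) x :=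
      ((hpow.mul (hpow2.mul hexp))).const_mul K
    have heq : (fun y : ℝ => y * (1 + y) * kummerDensity a b c y)
        =ᶠ[nhds x] (fun y : ℝ => K * (y ^ a * ((1 + y) ^ (1 - a - b) * Real.exp (-(c * y))))) := by
      filter_upwards [Ioi_mem_nhds hx] with y hy using key y hy
    have hD := hG.congr_of_eventuallyEq heq
    refine hD.congr_deriv ?_
    have e1 : x ^ a = x ^ (a - 1) * x := by
      rw [← Real.rpow_add_one hx.ne']; ring_nf
    have e2 : (1 + x) ^ (1 - a - b) = (1 + x) ^ (-a - b) * (1 + x) := by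
      rw [← Real.rpow_add_one h1x.ne']; ring_nf
    have e3 : (1 + x) ^ (1 - a - b - 1) = (1 + x) ^ (-a - b) := by congr 1; ring
    simp only [kummerDensity, ← hK, e1, e2, e3]
    ring
  · -- limit at 0⁺
    have hcont : ContinuousAt (fun y : ℝ => K * (y ^ a * ((1 + y) ^ (1 - a - b)
        * Real.exp (-(c * y))))) 0 := by
      apply ContinuousAt.mul continuousAt_const
      apply ContinuousAt.mul
      · exact Real.continuousAt_rpow_const 0 a (Or.inr ha.le)
      · apply ContinuousAt.mul
        · exact ContinuousAt.rpow_const (by fun_prop) (Or.inl (by norm_num))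
        · fun_prop
    have hval : K * ((0:ℝ) ^ a * ((1 + (0:ℝ)) ^ (1 - a - b) * Real.exp (-(c * 0)))) = 0 := by
      rw [Real.zero_rpow ha.ne']; ring
    have := hcont.continuousWithinAt (s := Set.Ioi (0:ℝ))
    rw [ContinuousWithinAt, hval] at this
    refine this.congr' ?_
    filter_upwards [self_mem_nhdsWithin] with y hy using (key y hy).symm
  · -- limit at ∞
    have h1 : Tendsto (fun x : ℝ => x ^ a * Real.exp (-(c/2) * x)) atTop (nhds 0) :=
      tendsto_rpow_mul_exp_neg_mul_atTop_nhds_zero a (c/2) (by linarith)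
    have h2 : Tendsto (fun x : ℝ => (1 + x) ^ (1 - a - b) * Real.exp (-(c/2) * (1 + x)))
        atTop (nhds 0) :=
      (tendsto_rpow_mul_exp_neg_mul_atTop_nhds_zero (1 - a - b) (c/2) (by linarith)).comp
        (tendsto_atTop_add_const_left atTop 1 tendsto_id)
    have h3 : Tendsto (fun x : ℝ => K * ((x ^ a * Real.exp (-(c/2) * x))
        * ((1 + x) ^ (1 - a - b) * Real.exp (-(c/2) * (1 + x)) * Real.exp (c/2)))) atTop
        (nhds (K * (0 * (0 * Real.exp (c/2))))) :=
      (h1.mul (h2.mul tendsto_const_nhds)).const_mul K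
    rw [show K * ((0:ℝ) * (0 * Real.exp (c/2))) = 0 by ring] at h3
    refine h3.congr' ?_
    filter_upwards [eventually_gt_atTop (0:ℝ)] with y hy
    rw [key y hy]
    have hexp : Real.exp (-(c/2) * y) * (Real.exp (-(c/2) * (1 + y)) * Real.exp (c/2))
        = Real.exp (-(c * y)) := by
      rw [← Real.exp_add, ← Real.exp_add]; congr 1; ring
    rw [← hexp]; ring
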